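/- Along solutions of the full matrix axisymmetric MHD–Zeitlin flow, the Hamiltonian H = -tr(Ψ(ΔΨ) - Q²) - tr(Ξ(ΔΞ) - P²) is conserved, assuming Δ is symmetric with respect to the trace form. -/

import Mathlib

open Matrix

attribute [local instance] Matrix.normedAddCommGroup Matrix.normedSpace

private lemma tr_lie_mul {N : ℕ} (A B C : Matrix (Fin N) (Fin N) ℂ) :
    (⁅A,B⁆ * C).trace = (⁅B,C⁆ * A).trace := by
  simp only [Ring.lie_def, sub_mul, Matrix.trace_sub, Matrix.mul_assoc]
  rw [Matrix.trace_mul_comm A (B*C), Matrix.trace_mul_comm C (B*A), Matrix.mul_assoc,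
    Matrix.mul_assoc]

private lemma tr_lie_self {N : ℕ} (A B : Matrix (Fin N) (Fin N) ℂ) :
    (⁅A,B⁆ * B).trace = 0 := by
  simp only [Ring.lie_def, sub_mul, Matrix.trace_sub, Matrix.mul_assoc]
  rw [Matrix.trace_mul_comm B (A*B)]
  simp [Matrix.mul_assoc]

private lemma tr_lie_self' {N : ℕ} (A B : Matrix (Fin N) (Fin N) ℂ) :
    (⁅A,B⁆ * A).trace = 0 := by
  rw [tr_lie_mul]; exact tr_lie_self B A

private lemma key {N : ℕ} (a b p q W E : Matrix (Fin N) (Fin N) ℂ) :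
    -(((⁅W,a⁆ + ⁅b,E⁆ + 2 • ⁅q,a⁆ + 2 • ⁅b,p⁆) * a).trace
        + (a * (⁅W,a⁆ + ⁅b,E⁆ + 2 • ⁅q,a⁆ + 2 • ⁅b,p⁆)).trace
      - (((⁅q,a⁆ + ⁅b,p⁆) * q).trace + (q * (⁅q,a⁆ + ⁅b,p⁆)).trace))
    - ((⁅b,a⁆ * E).trace + (E * ⁅b,a⁆).trace
      - (((⁅p,a⁆ + ⁅b,q⁆ + 2 • ⁅a,b⁆) * p).trace
        + (p * (⁅p,a⁆ + ⁅b,q⁆ + 2 • ⁅a,b⁆)).trace)) = 0 := by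
  have e1 : (⁅b,E⁆ * a).trace = -(⁅b,a⁆ * E).trace := by
    rw [tr_lie_mul b E a, tr_lie_mul E a b]
    simp only [Ring.lie_def, sub_mul, Matrix.trace_sub]; ring
  have e2 : (⁅b,p⁆ * a).trace = (⁅a,b⁆ * p).trace := by
    rw [tr_lie_mul b p a, tr_lie_mul p a b]
  have e3 : (⁅b,p⁆ * q).trace = -(⁅b,q⁆ * p).trace := by
    rw [tr_lie_mul b p q, tr_lie_mul p q b]
    simp only [Ring.lie_def, sub_mul, Matrix.trace_sub]; ring
  simp only [two_smul, add_mul, mul_add, Matrix.trace_add,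
    Matrix.trace_mul_comm a, Matrix.trace_mul_comm q, Matrix.trace_mul_comm p,
    Matrix.trace_mul_comm E, tr_lie_self, tr_lie_self']
  linear_combination (-2:ℂ)*e1 + (-4:ℂ)*e2 + 2*e3

private noncomputable def trB (N : ℕ) :
    Matrix (Fin N) (Fin N) ℂ →ₗ[ℝ] Matrix (Fin N) (Fin N) ℂ →ₗ[ℝ] ℂ :=
  LinearMap.mk₂ ℝ (fun A B => (A * B).trace)
    (fun A A' B => by simp [add_mul])
    (fun c A B => by simp [smul_mul_assoc])
    (fun A B B' => by simp [mul_add])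
    (fun c A B => by simp [mul_smul_comm])

private noncomputable def trBC (N : ℕ) :
    Matrix (Fin N) (Fin N) ℂ →L[ℝ] Matrix (Fin N) (Fin N) ℂ →L[ℝ] ℂ :=
  LinearMap.toContinuousLinearMap
    { toFun := fun A => LinearMap.toContinuousLinearMap (trB N A)
      map_add' := fun A A' => by ext B; simp [trB]
      map_smul' := fun c A => by ext B; simp [trB] }

private lemma hasDerivAt_trmul {N : ℕ} {f g : ℝ → Matrix (Fin N) (Fin N) ℂ}
    {f' g' : Matrix (Fin N) (Fin N) ℂ} {t : ℝ}
    (hf : HasDerivAt f f' t) (hg : HasDerivAt g g' t) :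
    HasDerivAt (fun s => (f s * g s).trace) ((f' * g t).trace + (f t * g').trace) t := by
  have h := ((trBC N).isBoundedBilinearMap.hasFDerivAt ((f t, g t))).comp_hasDerivAt t
    (hf.prodMk hg)
  convert h using 1
  · rfl
  · rfl
  rw [IsBoundedBilinearMap.deriv_apply, add_comm]
  rfl

private lemma hasDerivAt_lin {N : ℕ}
    (Δ : Matrix (Fin N) (Fin N) ℂ ≃ₗ[ℂ] Matrix (Fin N) (Fin N) ℂ)
    {f : ℝ → Matrix (Fin N) (Fin N) ℂ} {f' : Matrix (Fin N) (Fin N) ℂ} {t : ℝ}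
    (hf : HasDerivAt f f' t) :
    HasDerivAt (fun s => Δ (f s)) (Δ f') t := by
  have h := ((Δ.toLinearMap.restrictScalars ℝ).toContinuousLinearMap.hasFDerivAt
      (x := f t)).comp_hasDerivAt t hf
  exact h

/-- Along solutions of the full matrix axisymmetric MHD–Zeitlin flow (with
`W = ΔΨ`), the Hamiltonian `H = -tr(Ψ(ΔΨ) - Q²) - tr(Ξ(ΔΞ) - P²)` is
conserved, where `Δ` is invertible and symmetric for the trace form. -/
theorem stmt9 {N : ℕ}
    (Δ : Matrix (Fin N) (Fin N) ℂ ≃ₗ[ℂ] Matrix (Fin N) (Fin N) ℂ)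
    (hΔ : ∀ A B : Matrix (Fin N) (Fin N) ℂ,
      ((Δ A) * B).trace = (A * (Δ B)).trace)
    (Ψ P Q Ξ : ℝ → Matrix (Fin N) (Fin N) ℂ)
    (hsu : ∀ t, (Ψ t)ᴴ = -Ψ t ∧ (P t)ᴴ = -P t ∧ (Q t)ᴴ = -Q t ∧ (Ξ t)ᴴ = -Ξ t)
    (htr : ∀ t, (Ψ t).trace = 0 ∧ (P t).trace = 0 ∧ (Q t).trace = 0 ∧
      (Ξ t).trace = 0)
    (hΨ : ∀ t, HasDerivAt Ψ (Δ.symm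
      (⁅Δ (Ψ t), Ψ t⁆ + ⁅Ξ t, Δ (Ξ t)⁆ + 2 • ⁅Q t, Ψ t⁆ + 2 • ⁅Ξ t, P t⁆)) t)
    (hP : ∀ t, HasDerivAt P (⁅P t, Ψ t⁆ + ⁅Ξ t, Q t⁆ + 2 • ⁅Ψ t, Ξ t⁆) t)
    (hQ : ∀ t, HasDerivAt Q (⁅Q t, Ψ t⁆ + ⁅Ξ t, P t⁆) t)
    (hΞ : ∀ t, HasDerivAt Ξ ⁅Ξ t, Ψ t⁆ t) :
    ∀ t, -(Ψ t * Δ (Ψ t) - Q t ^ 2).trace - (Ξ t * Δ (Ξ t) - P t ^ 2).trace =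
      -(Ψ 0 * Δ (Ψ 0) - Q 0 ^ 2).trace - (Ξ 0 * Δ (Ξ 0) - P 0 ^ 2).trace := by
  set F : ℝ → ℂ := fun s =>
    -((Ψ s * Δ (Ψ s)).trace - (Q s * Q s).trace)
      - ((Ξ s * Δ (Ξ s)).trace - (P s * P s).trace) with hF
  have hFderiv : ∀ t, HasDerivAt F 0 t := by
    intro t
    set X : Matrix (Fin N) (Fin N) ℂ :=
      ⁅Δ (Ψ t), Ψ t⁆ + ⁅Ξ t, Δ (Ξ t)⁆ + 2 • ⁅Q t, Ψ t⁆ + 2 • ⁅Ξ t, P t⁆ with hX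
    have h1 := hasDerivAt_trmul (hΨ t) (hasDerivAt_lin Δ (hΨ t))
    have h2 := hasDerivAt_trmul (hQ t) (hQ t)
    have h3 := hasDerivAt_trmul (hΞ t) (hasDerivAt_lin Δ (hΞ t))
    have h4 := hasDerivAt_trmul (hP t) (hP t)
    have hD := ((h1.sub h2).neg).sub (h3.sub h4)
    convert hD using 1
    · rfl
    · rfl
    -- now prove the value is 0
    have symm1 : (Δ.symm X * Δ (Ψ t)).trace = (X * Ψ t).trace := by
      rw [← hΔ (Δ.symm X) (Ψ t), Δ.apply_symm_apply]
    have symm2 : (Ψ t * Δ (Δ.symm X)).trace = (Ψ t * X).trace := by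
      rw [Δ.apply_symm_apply]
    have symm3 : (Ξ t * Δ ⁅Ξ t, Ψ t⁆).trace = (Δ (Ξ t) * ⁅Ξ t, Ψ t⁆).trace :=
      (hΔ (Ξ t) ⁅Ξ t, Ψ t⁆).symm
    rw [symm1, symm2, symm3]
    have := key (Ψ t) (Ξ t) (P t) (Q t) (Δ (Ψ t)) (Δ (Ξ t))
    rw [← hX] at this
    linear_combination -this
  have hconst : ∀ t, F t = F 0 := by
    intro t
    have hd : Differentiable ℝ F := fun s => (hFderiv s).differentiableAt
    exact is_const_of_deriv_eq_zero hd (fun s => (hFderiv s).deriv) t 0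
  intro t
  have e : ∀ s, -(Ψ s * Δ (Ψ s) - Q s ^ 2).trace - (Ξ s * Δ (Ξ s) - P s ^ 2).trace
      = F s := by
    intro s; simp [hF, sq]
  rw [e t, e 0, hconst t]
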